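/- Let x ∈ M and suppose that for some sequence n₁ < n₂ < … the empirical measures (1/n_k)Σ_{j=0}^{n_k−1} δ_{f_t^j x} converge weak* to an ergodic stationary measure μ_i for t in a set W_i(x) ⊆ supp(θ^ℕ). Define W_{i,j}(x) = {t ∈ supp(θ^ℕ) : f_t^j x ∈ int B(μ_i)}, where B(μ_i) is the ergodic basin of μ_i and every point of int(supp μ_i) lies in B(μ_i) with int B(μ_i) ⊇ int(supp μ_i) open and visited by orbits generating μ_i. Then W_i(x) = ⋃_{j≥1} W_{i,j}(x) modulo a θ^ℕ-null set; in particular W_i(x) does not depend on the chosen subsequence (n_k). -/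

import Mathlib

open MeasureTheory Filter Topology

/-- Random orbit: `rorb Φ x n t = f_{t_{n-1}} ∘ ⋯ ∘ f_{t_0} (x)`. -/
def rorb {M : Type*} [TopologicalSpace M] (Φ : ℝ → C(M, M)) (x : M) :
    ℕ → (ℕ → ℝ) → M
  | 0, _ => x
  | n + 1, t => (Φ (t n)) (rorb Φ x n t)

/-- The support of a measure. -/
def msupport {X : Type*} [TopologicalSpace X] [MeasurableSpace X]
    (μ : Measure X) : Set X :=
  {x | ∀ U : Set X, IsOpen U → x ∈ U → 0 < μ U}

/-- Weak* convergence of the empirical measures of the random orbit of `x`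
driven by `t`, along a subsequence `nk`, to `ν`. -/
def empConvAlong {M : Type*} [TopologicalSpace M] [MeasurableSpace M]
    (Φ : ℝ → C(M, M)) (x : M) (t : ℕ → ℝ) (nk : ℕ → ℕ) (ν : Measure M) :
    Prop :=
  ∀ g : C(M, ℝ),
    Tendsto (fun k => (nk k : ℝ)⁻¹ *
        ∑ j ∈ Finset.range (nk k), g (rorb Φ x j t))
      atTop (nhds (∫ y, g y ∂ν))

/-- The ergodic basin `B(ν)` of `ν`: points whose empirical measures converge
weak* to `ν` for almost every noise realization. -/
def basinM {M : Type*} [TopologicalSpace M] [MeasurableSpace M]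
    (Φ : ℝ → C(M, M)) (P : Measure (ℕ → ℝ)) (ν : Measure M) : Set M :=
  {y | ∀ᵐ t ∂P, empConvAlong Φ y t (fun n => n) ν}

namespace BHC

open TopologicalSpace

/-! ### Deterministic lemmas -/

section Det
variable {M : Type*} [TopologicalSpace M]

lemma rorb_add (Φ : ℝ → C(M, M)) (x : M) (m n : ℕ) (t : ℕ → ℝ) :
    rorb Φ x (m + n) t = rorb Φ (rorb Φ x m t) n (fun i => t (m + i)) := by
  induction n with
  | zero => rfl
  | succ n ih =>
    show (Φ (t (m + n))) (rorb Φ x (m + n) t) = _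
    rw [ih]; rfl

lemma rorb_congr (Φ : ℝ → C(M, M)) (x : M) (n : ℕ) {t t' : ℕ → ℝ}
    (h : ∀ i < n, t i = t' i) : rorb Φ x n t = rorb Φ x n t' := by
  induction n with
  | zero => rfl
  | succ n ih =>
    simp only [rorb, ih fun i hi => h i (Nat.lt_succ_of_lt hi), h n (Nat.lt_succ_self n)]

end Det

/-- Cesàro average shift. -/
lemma cesaro_shift {a : ℕ → ℝ} {m : ℕ} {L : ℝ}
    (h : Tendsto (fun n : ℕ => (n : ℝ)⁻¹ * ∑ j ∈ Finset.range n, a (m + j)) atTop (𝓝 L)) :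
    Tendsto (fun n : ℕ => (n : ℝ)⁻¹ * ∑ j ∈ Finset.range n, a j) atTop (𝓝 L) := by
  set C : ℝ := ∑ j ∈ Finset.range m, a j with hC
  have hsub : Tendsto (fun n => n - m) atTop (atTop : Filter ℕ) :=
    tendsto_sub_atTop_nat m
  have h2 : Tendsto (fun n : ℕ => ((n - m : ℕ) : ℝ)⁻¹ *
      ∑ j ∈ Finset.range (n - m), a (m + j)) atTop (𝓝 L) := h.comp hsub
  have h3 : Tendsto (fun n : ℕ => (n : ℝ)⁻¹ * C) atTop (𝓝 0) := by
    simpa using (tendsto_inv_atTop_nhds_zero_nat (𝕜 := ℝ)).mul_const C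
  have h4 : Tendsto (fun n : ℕ => (((n - m : ℕ) : ℝ) * (n : ℝ)⁻¹)) atTop (𝓝 1) := by
    have : ∀ᶠ n : ℕ in atTop, (((n - m : ℕ) : ℝ) * (n : ℝ)⁻¹) = 1 - (m : ℝ) * (n : ℝ)⁻¹ := by
      filter_upwards [eventually_ge_atTop (m + 1)] with n hn
      have hn0 : (n : ℝ) ≠ 0 := Nat.cast_ne_zero.mpr (by omega)
      have : ((n - m : ℕ) : ℝ) = (n : ℝ) - m := by
        rw [Nat.cast_sub (by omega)]
      rw [this, sub_mul, mul_inv_cancel₀ hn0]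
    rw [tendsto_congr' this]
    have : Tendsto (fun n : ℕ => (m : ℝ) * (n : ℝ)⁻¹) atTop (𝓝 0) := by
      simpa using (tendsto_inv_atTop_nhds_zero_nat (𝕜 := ℝ)).const_mul (m : ℝ)
    simpa using (tendsto_const_nhds (x := (1:ℝ))).sub this
  have key : Tendsto (fun n : ℕ => (n : ℝ)⁻¹ * C +
      (((n - m : ℕ) : ℝ) * (n : ℝ)⁻¹) * (((n - m : ℕ) : ℝ)⁻¹ *
        ∑ j ∈ Finset.range (n - m), a (m + j))) atTop (𝓝 (0 + 1 * L)) :=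
    h3.add (h4.mul h2)
  rw [zero_add, one_mul] at key
  refine key.congr' ?_
  filter_upwards [eventually_ge_atTop (m + 1)] with n hn
  have hm : m ≤ n := by omega
  have hnm0 : ((n - m : ℕ) : ℝ) ≠ 0 := Nat.cast_ne_zero.mpr (by omega)
  have hsplit : ∑ j ∈ Finset.range n, a j
      = C + ∑ j ∈ Finset.range (n - m), a (m + j) := by
    rw [hC, ← Finset.sum_range_add, Nat.add_sub_cancel' hm]
  rw [hsplit, mul_add]
  congr 1
  rw [mul_comm (((n - m : ℕ) : ℝ)) ((n:ℝ)⁻¹), mul_assoc, ← mul_assoc (((n - m : ℕ) : ℝ)),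
    mul_inv_cancel₀ hnm0, one_mul]

/-! ### Continuity and measurability of averages -/

section Meas
variable {M : Type*} [MetricSpace M] [CompactSpace M] [MeasurableSpace M] [BorelSpace M]
variable {Φ : ℝ → C(M, M)} {μi : Measure M}

omit [MeasurableSpace M] [BorelSpace M] in
lemma continuous_rorb' (hΦ : Continuous Φ) (n : ℕ) :
    Continuous fun p : M × (ℕ → ℝ) => rorb Φ p.1 n p.2 := by
  induction n with
  | zero => exact continuous_fst
  | succ n ih =>
    have h1 : Continuous fun p : M × (ℕ → ℝ) => (Φ (p.2 n), rorb Φ p.1 n p.2) :=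
      ((hΦ.comp ((continuous_apply n).comp continuous_snd))).prodMk ih
    exact ContinuousEval.continuous_eval.comp h1

noncomputable def avg (Φ : ℝ → C(M, M)) (g : C(M, ℝ)) (n : ℕ) (p : M × (ℕ → ℝ)) : ℝ :=
  (n : ℝ)⁻¹ * ∑ j ∈ Finset.range n, g (rorb Φ p.1 j p.2)

lemma integrable_cm [IsProbabilityMeasure μi] (g : C(M, ℝ)) : Integrable g μi :=
  g.continuous.integrable_of_hasCompactSupport (HasCompactSupport.of_compactSpace g)

omit [MeasurableSpace M] [BorelSpace M] in
lemma abs_avg_sub_avg (g h : C(M, ℝ)) (n : ℕ) (p : M × (ℕ → ℝ)) :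
    |avg Φ g n p - avg Φ h n p| ≤ dist g h := by
  rcases Nat.eq_zero_or_pos n with rfl | hn
  · simp [avg, dist_nonneg]
  · have heq : avg Φ g n p - avg Φ h n p
        = (n : ℝ)⁻¹ * ∑ j ∈ Finset.range n, (g (rorb Φ p.1 j p.2) - h (rorb Φ p.1 j p.2)) := by
      rw [avg, avg, Finset.sum_sub_distrib, mul_sub]
    rw [heq, abs_mul, abs_inv, Nat.abs_cast]
    have h1 : |∑ j ∈ Finset.range n, (g (rorb Φ p.1 j p.2) - h (rorb Φ p.1 j p.2))|
        ≤ n * dist g h := by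
      refine (Finset.abs_sum_le_sum_abs _ _).trans ?_
      have : ∀ j ∈ Finset.range n, |g (rorb Φ p.1 j p.2) - h (rorb Φ p.1 j p.2)| ≤ dist g h :=
        fun j _ => by
          rw [← Real.dist_eq]; exact ContinuousMap.dist_apply_le_dist _
      calc ∑ j ∈ Finset.range n, |g (rorb Φ p.1 j p.2) - h (rorb Φ p.1 j p.2)|
          ≤ ∑ _j ∈ Finset.range n, dist g h := Finset.sum_le_sum this
        _ = n * dist g h := by simp [mul_comm]
    have hn0 : (0:ℝ) < (n:ℝ) := by exact_mod_cast hn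
    calc (n : ℝ)⁻¹ * |∑ j ∈ Finset.range n, (g (rorb Φ p.1 j p.2) - h (rorb Φ p.1 j p.2))|
        ≤ (n : ℝ)⁻¹ * (n * dist g h) := mul_le_mul_of_nonneg_left h1 (by positivity)
      _ = dist g h := by field_simp

lemma abs_integral_sub [IsProbabilityMeasure μi] (g h : C(M, ℝ)) :
    |∫ y, g y ∂μi - ∫ y, h y ∂μi| ≤ dist g h := by
  rw [← integral_sub (integrable_cm g) (integrable_cm h)]
  have := norm_integral_le_of_norm_le_const (μ := μi)
    (f := fun y => g y - h y) (C := dist g h) ?_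
  · simpa using this
  · filter_upwards with y
    rw [Real.norm_eq_abs, ← Real.dist_eq]
    exact ContinuousMap.dist_apply_le_dist _

/-- If convergence holds for a dense family of test functions, it holds for all. -/
lemma empConv_of_dense [IsProbabilityMeasure μi] {D : ℕ → C(M, ℝ)} (hD : DenseRange D)
    (p : M × (ℕ → ℝ))
    (h : ∀ i, Tendsto (fun n => avg Φ (D i) n p) atTop (𝓝 (∫ y, D i y ∂μi))) :
    empConvAlong Φ p.1 p.2 (fun n => n) μi := by
  intro g
  have hg : ∀ n : ℕ, (n : ℝ)⁻¹ * ∑ j ∈ Finset.range n, g (rorb Φ p.1 j p.2) = avg Φ g n p :=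
    fun n => rfl
  simp only [hg]
  rw [Metric.tendsto_atTop]
  intro ε hε
  obtain ⟨i, hi'⟩ := Metric.denseRange_iff.mp hD g (ε / 3) (by linarith)
  have hi : dist (D i) g < ε / 3 := by rwa [dist_comm]
  obtain ⟨N, hN⟩ := (Metric.tendsto_atTop.mp (h i)) (ε / 3) (by linarith)
  refine ⟨N, fun n hn => ?_⟩
  have h1 := abs_avg_sub_avg (Φ := Φ) g (D i) n p
  have h2 := hN n hn
  have h3 := abs_integral_sub (μi := μi) (D i) g
  rw [Real.dist_eq] at h2 ⊢
  have hd : dist g (D i) = dist (D i) g := dist_comm _ _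
  have t1 : |avg Φ g n p - ∫ y, g y ∂μi|
      ≤ |avg Φ g n p - avg Φ (D i) n p| + |avg Φ (D i) n p - ∫ y, g y ∂μi| :=
    abs_sub_le _ _ _
  have t2 : |avg Φ (D i) n p - ∫ y, g y ∂μi|
      ≤ |avg Φ (D i) n p - ∫ y, D i y ∂μi| + |∫ y, D i y ∂μi - ∫ y, g y ∂μi| :=
    abs_sub_le _ _ _
  rw [hd] at h1
  linarith

/-- The set of pairs `(y, t)` whose empirical averages converge to `μi` is measurable. -/
lemma measurableSet_conv (hΦ : Continuous Φ) [IsProbabilityMeasure μi] :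
    MeasurableSet {p : M × (ℕ → ℝ) | empConvAlong Φ p.1 p.2 (fun n => n) μi} := by
  have hne : Nonempty C(M, ℝ) := ⟨0⟩
  set D : ℕ → C(M, ℝ) := denseSeq C(M, ℝ)
  have hD : DenseRange D := denseRange_denseSeq C(M, ℝ)
  have heq : {p : M × (ℕ → ℝ) | empConvAlong Φ p.1 p.2 (fun n => n) μi}
      = ⋂ i, {p | Tendsto (fun n => avg Φ (D i) n p) atTop (𝓝 (∫ y, D i y ∂μi))} := by
    ext p
    simp only [Set.mem_setOf_eq, Set.mem_iInter]
    exact ⟨fun hp i => hp (D i), fun hp => empConv_of_dense hD p hp⟩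
  rw [heq]
  refine MeasurableSet.iInter fun i => ?_
  refine measurableSet_tendsto (𝓝 (∫ y, D i y ∂μi)) fun n => ?_
  have hc : Continuous fun p : M × (ℕ → ℝ) =>
      ∑ j ∈ Finset.range n, (D i) (rorb Φ p.1 j p.2) :=
    continuous_finset_sum _ fun j _ => (D i).continuous.comp (continuous_rorb' hΦ j)
  exact (continuous_const.mul hc).measurable

end Meas

/-- Projection to the first `n` coordinates. -/
def proj (n : ℕ) : (ℕ → ℝ) → (Fin n → ℝ) := fun t i => t i

/-- Shift by `m`. -/
def shiftm (m : ℕ) : (ℕ → ℝ) → (ℕ → ℝ) := fun t i => t (m + i)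

lemma measurable_proj (n : ℕ) : Measurable (proj n) :=
  measurable_pi_lambda _ fun i => measurable_pi_apply _

lemma measurable_shiftm (m : ℕ) : Measurable (shiftm m) :=
  measurable_pi_lambda _ fun i => measurable_pi_apply _

/-- Cylinder sets. -/
def cylSet : Set (Set (ℕ → ℝ)) :=
  {S | ∃ n, ∃ B : Set (Fin n → ℝ), MeasurableSet B ∧ S = proj n ⁻¹' B}

lemma measurable_castLE {n N : ℕ} (h : n ≤ N) :
    Measurable fun (v : Fin N → ℝ) (i : Fin n) => v (Fin.castLE h i) :=
  measurable_pi_lambda _ fun i => measurable_pi_apply _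

lemma proj_preimage_mono {n N : ℕ} (h : n ≤ N) (B : Set (Fin n → ℝ)) :
    proj n ⁻¹' B = proj N ⁻¹' ((fun (v : Fin N → ℝ) (i : Fin n) => v (Fin.castLE h i)) ⁻¹' B) :=
  rfl

lemma isPiSystem_cylSet : IsPiSystem cylSet := by
  rintro S1 ⟨n1, B1, hB1, rfl⟩ S2 ⟨n2, B2, hB2, rfl⟩ -
  refine ⟨max n1 n2,
    ((fun (v : Fin (max n1 n2) → ℝ) (i : Fin n1) => v (Fin.castLE (le_max_left _ _) i)) ⁻¹' B1) ∩
    ((fun (v : Fin (max n1 n2) → ℝ) (i : Fin n2) => v (Fin.castLE (le_max_right _ _) i)) ⁻¹' B2),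
    ((measurable_castLE _ hB1).inter (measurable_castLE _ hB2)), ?_⟩
  rw [Set.preimage_inter,
    ← proj_preimage_mono (le_max_left n1 n2) B1, ← proj_preimage_mono (le_max_right n1 n2) B2]

lemma generateFrom_cylSet :
    (inferInstance : MeasurableSpace (ℕ → ℝ)) = MeasurableSpace.generateFrom cylSet := by
  refine le_antisymm ?_ ?_
  · rw [show (inferInstance : MeasurableSpace (ℕ → ℝ)) = MeasurableSpace.pi from rfl,
      MeasurableSpace.pi]
    refine iSup_le fun i => ?_
    intro s hs
    obtain ⟨s', hs', rfl⟩ := hs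
    refine MeasurableSpace.measurableSet_generateFrom ?_
    refine ⟨i + 1, {v : Fin (i + 1) → ℝ | v ⟨i, Nat.lt_succ_self i⟩ ∈ s'}, ?_, rfl⟩
    exact measurable_pi_apply _ hs'
  · refine MeasurableSpace.generateFrom_le ?_
    rintro S ⟨n, B, hB, rfl⟩
    exact measurable_proj n hB

/-- Two finite measures on `ℕ → ℝ` with the same finite-dimensional distributions agree. -/
lemma ext_cyl {Q₁ Q₂ : Measure (ℕ → ℝ)} [IsFiniteMeasure Q₁] [IsFiniteMeasure Q₂]
    (h : ∀ n (B : Set (Fin n → ℝ)), MeasurableSet B → Q₁ (proj n ⁻¹' B) = Q₂ (proj n ⁻¹' B)) :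
    Q₁ = Q₂ := by
  refine ext_of_generate_finite cylSet generateFrom_cylSet isPiSystem_cylSet ?_ ?_
  · rintro S ⟨n, B, hB, rfl⟩; exact h n B hB
  · have := h 0 Set.univ MeasurableSet.univ
    simpa using this

/-- Splitting of the finite product measure. -/
lemma pi_split (θ : Measure ℝ) [IsProbabilityMeasure θ] (m n : ℕ)
    {A : Set (Fin m → ℝ)} {B : Set (Fin n → ℝ)} (hA : MeasurableSet A) (hB : MeasurableSet B) :
    Measure.pi (fun _ : Fin (m + n) => θ)
      {v | (fun i : Fin m => v (Fin.castAdd n i)) ∈ A ∧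
           (fun i : Fin n => v (Fin.natAdd m i)) ∈ B}
    = Measure.pi (fun _ : Fin m => θ) A * Measure.pi (fun _ : Fin n => θ) B := by
  set e : Fin m ⊕ Fin n ≃ Fin (m + n) := finSumFinEquiv
  have h1 : MeasurePreserving (MeasurableEquiv.sumPiEquivProdPi
        (fun _ : Fin m ⊕ Fin n => ℝ)).symm
      ((Measure.pi fun _ : Fin m => θ).prod (Measure.pi fun _ : Fin n => θ))
      (Measure.pi fun _ : Fin m ⊕ Fin n => θ) :=
    measurePreserving_sumPiEquivProdPi_symm (fun _ : Fin m ⊕ Fin n => θ)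
  have h2 : MeasurePreserving (MeasurableEquiv.piCongrLeft (fun _ : Fin (m + n) => ℝ) e)
      (Measure.pi fun _ : Fin m ⊕ Fin n => θ) (Measure.pi fun _ : Fin (m + n) => θ) :=
    measurePreserving_piCongrLeft (fun _ => θ) e
  have h3 := (h2.comp h1)
  set S : Set (Fin (m + n) → ℝ) :=
    {v | (fun i : Fin m => v (Fin.castAdd n i)) ∈ A ∧
         (fun i : Fin n => v (Fin.natAdd m i)) ∈ B}
  have hS : MeasurableSet S :=
    ((measurable_pi_lambda (fun (v : Fin (m+n) → ℝ) (i : Fin m) => v (Fin.castAdd n i))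
        fun i => measurable_pi_apply _) hA).inter
      ((measurable_pi_lambda (fun (v : Fin (m+n) → ℝ) (i : Fin n) => v (Fin.natAdd m i))
        fun i => measurable_pi_apply _) hB)
  have hpre : (MeasurableEquiv.piCongrLeft (fun _ : Fin (m + n) => ℝ) e) ∘
      (MeasurableEquiv.sumPiEquivProdPi (fun _ : Fin m ⊕ Fin n => ℝ)).symm ⁻¹' S
      = A ×ˢ B := by
    ext ⟨a, b⟩
    simp only [Set.mem_preimage, Function.comp_apply, Set.mem_prod, S, Set.mem_setOf_eq]
    have hl : ∀ i : Fin m,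
        (MeasurableEquiv.piCongrLeft (fun _ : Fin (m + n) => ℝ) e)
          ((MeasurableEquiv.sumPiEquivProdPi (fun _ : Fin m ⊕ Fin n => ℝ)).symm (a, b))
          (Fin.castAdd n i) = a i := by
      intro i
      rw [← finSumFinEquiv_apply_left (i := i)]
      exact Equiv.piCongrLeft_sumInl (fun _ => ℝ) e a b i
    have hr : ∀ i : Fin n,
        (MeasurableEquiv.piCongrLeft (fun _ : Fin (m + n) => ℝ) e)
          ((MeasurableEquiv.sumPiEquivProdPi (fun _ : Fin m ⊕ Fin n => ℝ)).symm (a, b))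
          (Fin.natAdd m i) = b i := by
      intro i
      rw [← finSumFinEquiv_apply_right (i := i)]
      exact Equiv.piCongrLeft_sumInr (fun _ => ℝ) e a b i
    constructor
    · rintro ⟨hA', hB'⟩
      constructor
      · convert hA' using 1; ext i; exact (hl i).symm
      · convert hB' using 1; ext i; exact (hr i).symm
    · rintro ⟨hA', hB'⟩
      constructor
      · convert hA' using 1; ext i; exact hl i
      · convert hB' using 1; ext i; exact hr i
  have hmp := h3.measure_preimage hS.nullMeasurableSet
  rw [Set.preimage_comp] at hpre hmp
  rw [← hmp, hpre, Measure.prod_prod]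

lemma map_split (θ : Measure ℝ) [IsProbabilityMeasure θ]
    (P : Measure (ℕ → ℝ)) [IsProbabilityMeasure P]
    (hP : ∀ n : ℕ, P.map (fun t (i : Fin n) => t (i : ℕ)) = Measure.pi (fun _ : Fin n => θ))
    (m : ℕ) :
    P.map (fun t => (proj m t, shiftm m t)) = (Measure.pi fun _ : Fin m => θ).prod P := by
  have hPcyl : ∀ n (B : Set (Fin n → ℝ)), MeasurableSet B →
      P (proj n ⁻¹' B) = Measure.pi (fun _ : Fin n => θ) B := by
    intro n B hB
    have hpn : (fun t (i : Fin n) => t (i : ℕ)) = proj n := rfl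
    rw [← hP n, hpn, Measure.map_apply (measurable_proj n) hB]
  symm
  refine Measure.prod_eq fun A B hA hB => ?_
  have hT : Measurable fun t => (proj m t, shiftm m t) :=
    (measurable_proj m).prodMk (measurable_shiftm m)
  rw [Measure.map_apply hT (hA.prod hB)]
  have hpre : (fun t => (proj m t, shiftm m t)) ⁻¹' (A ×ˢ B)
      = proj m ⁻¹' A ∩ shiftm m ⁻¹' B := rfl
  rw [hpre]
  -- compare two measures on `ℕ → ℝ`
  set ν₁ : Measure (ℕ → ℝ) := (P.restrict (proj m ⁻¹' A)).map (shiftm m) with hν₁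
  set ν₂ : Measure (ℕ → ℝ) := (Measure.pi (fun _ : Fin m => θ) A) • P with hν₂
  have hfin1 : IsFiniteMeasure ν₁ := by
    constructor
    rw [hν₁, Measure.map_apply (measurable_shiftm m) MeasurableSet.univ]
    exact lt_of_le_of_lt (le_trans (Measure.restrict_apply_le _ _) (measure_mono (Set.subset_univ _)))
      (measure_lt_top P _)
  have hfin2 : IsFiniteMeasure ν₂ := by
    constructor
    rw [hν₂, Measure.smul_apply, smul_eq_mul]
    exact ENNReal.mul_lt_top (measure_lt_top _ _) (measure_lt_top _ _)
  have hkey : ν₁ = ν₂ := by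
    refine ext_cyl fun n B' hB' => ?_
    rw [hν₁, Measure.map_apply (measurable_shiftm m) (measurable_proj n hB'),
      Measure.restrict_apply (measurable_shiftm m (measurable_proj n hB'))]
    rw [hν₂, Measure.smul_apply, smul_eq_mul]
    set S : Set (Fin (m + n) → ℝ) :=
      {v | (fun i : Fin m => v (Fin.castAdd n i)) ∈ A ∧
           (fun i : Fin n => v (Fin.natAdd m i)) ∈ B'} with hS
    have hSm : MeasurableSet S :=
      ((measurable_pi_lambda (fun (v : Fin (m+n) → ℝ) (i : Fin m) => v (Fin.castAdd n i))
          fun _ => measurable_pi_apply _) hA).inter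
        ((measurable_pi_lambda (fun (v : Fin (m+n) → ℝ) (i : Fin n) => v (Fin.natAdd m i))
          fun _ => measurable_pi_apply _) hB')
    have heq : shiftm m ⁻¹' (proj n ⁻¹' B') ∩ proj m ⁻¹' A = proj (m + n) ⁻¹' S := by
      ext t
      simp only [Set.mem_inter_iff, Set.mem_preimage, hS, Set.mem_setOf_eq, proj, shiftm]
      constructor
      · rintro ⟨h1, h2⟩
        refine ⟨?_, ?_⟩
        · convert h2 using 1; rfl
        · convert h1 using 1; rfl
      · rintro ⟨h1, h2⟩
        refine ⟨?_, ?_⟩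
        · convert h2 using 1; rfl
        · convert h1 using 1; rfl
    rw [heq, hPcyl (m + n) S hSm, pi_split θ m n hA hB', hPcyl n B' hB']
  have h1 : P (proj m ⁻¹' A ∩ shiftm m ⁻¹' B) = ν₁ B := by
    rw [hν₁, Measure.map_apply (measurable_shiftm m) hB,
      Measure.restrict_apply (measurable_shiftm m hB), Set.inter_comm]
  rw [h1, hkey, hν₂, Measure.smul_apply, smul_eq_mul]

/-! ### The main a.e. characterization -/

section Main
variable {M : Type*} [MetricSpace M] [CompactSpace M] [MeasurableSpace M] [BorelSpace M]
variable {Φ : ℝ → C(M, M)} {θ : Measure ℝ} {P : Measure (ℕ → ℝ)} {μi : Measure M}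

/-- Exact inclusion: convergence along a subsequence forces a visit of the
(interior of the) basin at a positive time. -/
lemma subset_hitting [IsProbabilityMeasure μi] [IsProbabilityMeasure P]
    (hΦ : Continuous Φ)
    (hUbasin : interior (msupport μi) ⊆ interior (basinM Φ P μi))
    (hUpos : 0 < μi (interior (msupport μi)))
    (x : M) (nk : ℕ → ℕ) (hnk : StrictMono nk) :
    {t | t ∈ msupport P ∧ empConvAlong Φ x t nk μi} ⊆
      ⋃ j : ℕ, {t | t ∈ msupport P ∧ rorb Φ x (j + 1) t ∈ interior (basinM Φ P μi)} := by
  rintro t ⟨htP, hconv⟩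
  by_contra hcon
  have hnot : ∀ j : ℕ, rorb Φ x (j + 1) t ∉ interior (basinM Φ P μi) := by
    intro j hj
    exact hcon (Set.mem_iUnion.mpr ⟨j, htP, hj⟩)
  -- construct a bump function supported in `U`
  set U : Set M := interior (msupport μi) with hUdef
  have hU : IsOpen U := isOpen_interior
  obtain ⟨K, hKU, hKclosed, hK0⟩ := hU.exists_lt_isClosed hUpos
  have hKcomp : IsCompact K := hKclosed.isCompact
  obtain ⟨g, hg1, hg0, -, hgIcc⟩ :=
    exists_continuous_one_zero_of_isCompact hKcomp hU.isClosed_compl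
      (Set.disjoint_left.mpr fun a ha hc => hc (hKU ha))
  -- the integral of `g` is positive
  have hginteg : Integrable g μi := integrable_cm g
  have hintK : ∫ y in K, g y ∂μi = (μi K).toReal := by
    rw [setIntegral_congr_fun hKclosed.measurableSet (fun y hy => hg1 hy)]
    simp
    rfl
  have hintpos : 0 < ∫ y, g y ∂μi := by
    have hle : ∫ y in K, g y ∂μi ≤ ∫ y, g y ∂μi := by
      refine setIntegral_le_integral hginteg ?_
      filter_upwards with y
      exact (hgIcc y).1
    have htr : 0 < (μi K).toReal :=
      ENNReal.toReal_pos (ne_of_gt hK0) (measure_ne_top _ _)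
    rw [hintK] at hle
    linarith
  -- all positive-time orbit points avoid `U`, so the averages tend to `0`
  have hzero : ∀ j : ℕ, 1 ≤ j → g (rorb Φ x j t) = 0 := by
    intro j hj
    obtain ⟨j', rfl⟩ : ∃ j', j = j' + 1 := ⟨j - 1, by omega⟩
    have : rorb Φ x (j' + 1) t ∉ U := fun hmem => hnot j' (hUbasin hmem)
    exact hg0 this
  have hsum : ∀ n : ℕ, 1 ≤ n →
      ∑ j ∈ Finset.range n, g (rorb Φ x j t) = g x := by
    intro n hn
    rw [Finset.sum_eq_single_of_mem 0 (Finset.mem_range.mpr (by omega))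
      (fun j _ hj => hzero j (by omega))]
    rfl
  have htend0 : Tendsto (fun k => (nk k : ℝ)⁻¹ *
      ∑ j ∈ Finset.range (nk k), g (rorb Φ x j t)) atTop (𝓝 0) := by
    have hev : ∀ᶠ k in atTop, (nk k : ℝ)⁻¹ *
        ∑ j ∈ Finset.range (nk k), g (rorb Φ x j t) = (nk k : ℝ)⁻¹ * g x := by
      filter_upwards [eventually_ge_atTop 1] with k hk
      rw [hsum (nk k) (le_trans hk (hnk.le_apply))]
    rw [tendsto_congr' hev]
    have hinv : Tendsto (fun k => (nk k : ℝ)⁻¹) atTop (𝓝 0) :=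
      (tendsto_inv_atTop_nhds_zero_nat (𝕜 := ℝ)).comp hnk.tendsto_atTop
    simpa using hinv.mul_const (g x)
  have := tendsto_nhds_unique (hconv g) htend0
  linarith

/-- For each `j`, almost every noise entering the interior of the basin at time
`j+1` generates `μi`. -/
lemma null_bad [IsProbabilityMeasure μi] [IsProbabilityMeasure P] [IsProbabilityMeasure θ]
    (hΦ : Continuous Φ)
    (hP : ∀ n : ℕ, P.map (fun t (i : Fin n) => t (i : ℕ)) = Measure.pi (fun _ : Fin n => θ))
    (x : M) (nk : ℕ → ℕ) (hnk : StrictMono nk) (j : ℕ) :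
    P {t | rorb Φ x (j + 1) t ∈ interior (basinM Φ P μi) ∧
        ¬ empConvAlong Φ x t nk μi} = 0 := by
  set m : ℕ := j + 1
  set IB : Set M := interior (basinM Φ P μi) with hIB
  set Sconv : Set (M × (ℕ → ℝ)) :=
    {p : M × (ℕ → ℝ) | empConvAlong Φ p.1 p.2 (fun n => n) μi} with hSconv
  have hSconvMeas : MeasurableSet Sconv := measurableSet_conv hΦ
  -- finite-word version of the orbit
  set ext' : (Fin m → ℝ) → (ℕ → ℝ) :=
    fun a i => if h : i < m then a ⟨i, h⟩ else 0 with hext'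
  set F : (Fin m → ℝ) → M := fun a => rorb Φ x m (ext' a) with hF
  have hFproj : ∀ t, F (proj m t) = rorb Φ x m t := by
    intro t
    refine rorb_congr Φ x m fun i hi => ?_
    simp [hext', hi, proj]
  have hFcont : Continuous F := by
    have hextc : Continuous ext' := by
      refine continuous_pi fun i => ?_
      by_cases h : i < m
      · simp only [hext', dif_pos h]; exact continuous_apply _
      · simp only [hext', dif_neg h]; exact continuous_const
    exact (continuous_rorb' hΦ m).comp (continuous_const.prodMk hextc)
  -- the bad set as a preimage
  set E₂ : Set ((Fin m → ℝ) × (ℕ → ℝ)) :=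
    {p | F p.1 ∈ IB ∧ (F p.1, p.2) ∉ Sconv} with hE₂
  have hE₂meas : MeasurableSet E₂ := by
    refine MeasurableSet.inter ?_ ?_
    · exact (hFcont.comp continuous_fst).measurable (isOpen_interior.measurableSet)
    · exact (((hFcont.comp continuous_fst).prodMk continuous_snd).measurable
        hSconvMeas).compl
  -- the deterministic implication
  have hdet : ∀ t : ℕ → ℝ, (rorb Φ x m t, shiftm m t) ∈ Sconv → empConvAlong Φ x t nk μi := by
    intro t hc g
    have hfull : Tendsto (fun n : ℕ => (n : ℝ)⁻¹ *
        ∑ i ∈ Finset.range n, g (rorb Φ x i t)) atTop (𝓝 (∫ y, g y ∂μi)) := by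
      refine cesaro_shift (a := fun i => g (rorb Φ x i t)) (m := m) ?_
      have := hc g
      simp only at this
      refine this.congr fun n => ?_
      congr 1
      refine Finset.sum_congr rfl fun i _ => ?_
      show g (rorb Φ (rorb Φ x m t) i (shiftm m t)) = g (rorb Φ x (m + i) t)
      rw [rorb_add Φ x m i t]
      rfl
    exact hfull.comp hnk.tendsto_atTop
  -- the bad set is contained in the preimage of `E₂`
  have hsub : {t | rorb Φ x (j + 1) t ∈ IB ∧ ¬ empConvAlong Φ x t nk μi}
      ⊆ (fun t => (proj m t, shiftm m t)) ⁻¹' E₂ := by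
    rintro t ⟨h1, h2⟩
    refine ⟨by rwa [hFproj], fun hc => h2 ?_⟩
    rw [hFproj] at hc
    exact hdet t hc
  refine measure_mono_null hsub ?_
  have hT : Measurable fun t => (proj m t, shiftm m t) :=
    (measurable_proj m).prodMk (measurable_shiftm m)
  rw [← Measure.map_apply hT hE₂meas, map_split θ P hP m, Measure.prod_apply hE₂meas]
  have hslice : ∀ a : Fin m → ℝ, P (Prod.mk a ⁻¹' E₂) = 0 := by
    intro a
    by_cases hmem : F a ∈ IB
    · have hbasin : F a ∈ basinM Φ P μi := interior_subset hmem
      have : Prod.mk a ⁻¹' E₂ ⊆ {s | ¬ empConvAlong Φ (F a) s (fun n => n) μi} := by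
        rintro s ⟨-, hs⟩
        exact hs
      refine measure_mono_null this ?_
      exact ae_iff.mp hbasin
    · have : Prod.mk a ⁻¹' E₂ = ∅ := by
        ext s
        simp only [Set.mem_preimage, hE₂, Set.mem_setOf_eq, Set.mem_empty_iff_false, iff_false]
        rintro ⟨hmem', -⟩
        exact hmem hmem'
      rw [this, measure_empty]
  simp only [hslice]
  simp

end Main

end BHC

/-- Lemma 4.7: with
`W_i(x) = {t ∈ supp θ^ℕ : empirical measures along (n_k) converge to μ_i}`
and `W_{i,j}(x) = {t ∈ supp θ^ℕ : f_t^j x ∈ int B(μ_i)}`, one has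
`W_i(x) = ⋃_{j≥1} W_{i,j}(x)` modulo a `θ^ℕ`-null set; in particular
`W_i(x)` does not depend on the chosen subsequence `(n_k)`. -/
theorem basin_hitting_characterization
    {M : Type*} [MetricSpace M] [CompactSpace M]
    [MeasurableSpace M] [BorelSpace M]
    (Φ : ℝ → C(M, M)) (hΦ : Continuous Φ)
    (θ : Measure ℝ) [IsProbabilityMeasure θ]
    (P : Measure (ℕ → ℝ)) [IsProbabilityMeasure P]
    (hP : ∀ n : ℕ, P.map (fun t (i : Fin n) => t (i : ℕ))
      = Measure.pi (fun _ : Fin n => θ))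
    (μi : Measure M) [IsProbabilityMeasure μi]
    (hstat : ∀ φ : C(M, ℝ),
      ∫ x, φ x ∂μi = ∫ t, ∫ x, φ ((Φ t) x) ∂μi ∂θ)
    (hUne : (interior (msupport μi)).Nonempty)
    (hUbasin : interior (msupport μi) ⊆ interior (basinM Φ P μi))
    (hUpos : 0 < μi (interior (msupport μi)))
    (x : M) (nk : ℕ → ℕ) (hnk : StrictMono nk) :
    P (symmDiff
        {t | t ∈ msupport P ∧ empConvAlong Φ x t nk μi}
        (⋃ j : ℕ,
          {t | t ∈ msupport P ∧
            rorb Φ x (j + 1) t ∈ interior (basinM Φ P μi)})) = 0 ∧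
    ∀ mk : ℕ → ℕ, StrictMono mk →
      P (symmDiff
          {t | t ∈ msupport P ∧ empConvAlong Φ x t nk μi}
          {t | t ∈ msupport P ∧ empConvAlong Φ x t mk μi}) = 0 := by
  set WW : Set (ℕ → ℝ) :=
    ⋃ j : ℕ, {t | t ∈ msupport P ∧ rorb Φ x (j + 1) t ∈ interior (basinM Φ P μi)} with hWW
  have key : ∀ mk : ℕ → ℕ, StrictMono mk →
      P (symmDiff {t | t ∈ msupport P ∧ empConvAlong Φ x t mk μi} WW) = 0 := by
    intro mk hmk
    have hsub1 := BHC.subset_hitting hΦ hUbasin hUpos x mk hmk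
    have hnull : P (⋃ j : ℕ, {t | rorb Φ x (j + 1) t ∈ interior (basinM Φ P μi) ∧
        ¬ empConvAlong Φ x t mk μi}) = 0 :=
      measure_iUnion_null fun j => BHC.null_bad hΦ hP x mk hmk j
    refine measure_mono_null ?_ hnull
    intro t ht
    rw [Set.mem_symmDiff] at ht
    rcases ht with ⟨htW, htWW⟩ | ⟨htWW, htW⟩
    · exact absurd (hsub1 htW) htWW
    · obtain ⟨j, htP, hj⟩ := Set.mem_iUnion.mp htWW
      have hnconv : ¬ empConvAlong Φ x t mk μi := fun hc => htW ⟨htP, hc⟩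
      exact Set.mem_iUnion.mpr ⟨j, hj, hnconv⟩
  refine ⟨key nk hnk, fun mk hmk => ?_⟩
  have h1 := key nk hnk
  have h2 := key mk hmk
  rw [symmDiff_comm] at h2
  refine measure_mono_null (symmDiff_triangle _ WW _) (measure_union_null h1 h2)
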